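/- If r₁ and r₂ are strongly normalising terms of Polymorphic System I (with respect to reduction → = ⇄* ∘ ↪ ∘ ⇄*), then the pair ⟨r₁,r₂⟩ is strongly normalising. -/

import Mathlib

/-- Types of Polymorphic System I: variables, arrows, conjunctions, universal types. -/
inductive Ty : Type
  | var : ℕ → Ty
  | arr : Ty → Ty → Ty
  | conj : Ty → Ty → Ty
  | all : ℕ → Ty → Ty
deriving DecidableEq

/-- Free type variables. -/
def ftv : Ty → Finset ℕ
  | .var X => {X}
  | .arr A B => ftv A ∪ ftv B
  | .conj A B => ftv A ∪ ftv B
  | .all X A => ftv A \ {X}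

/-- Type isomorphism ≡: the smallest congruence generated by the six isomorphisms of PSI. -/
inductive TyEquiv : Ty → Ty → Prop
  | comm (A B) : TyEquiv (.conj A B) (.conj B A)
  | assoc (A B C) : TyEquiv (.conj A (.conj B C)) (.conj (.conj A B) C)
  | distArr (A B C) : TyEquiv (.arr A (.conj B C)) (.conj (.arr A B) (.arr A C))
  | curry (A B C) : TyEquiv (.arr (.conj A B) C) (.arr A (.arr B C))
  | allArr (X A B) : X ∉ ftv A → TyEquiv (.all X (.arr A B)) (.arr A (.all X B))
  | allConj (X A B) : TyEquiv (.all X (.conj A B)) (.conj (.all X A) (.all X B))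
  | refl (A) : TyEquiv A A
  | symm {A B} : TyEquiv A B → TyEquiv B A
  | trans {A B C} : TyEquiv A B → TyEquiv B C → TyEquiv A C
  | congArr {A A' B B'} : TyEquiv A A' → TyEquiv B B' → TyEquiv (.arr A B) (.arr A' B')
  | congConj {A A' B B'} : TyEquiv A A' → TyEquiv B B' → TyEquiv (.conj A B) (.conj A' B')
  | congAll (X) {A B} : TyEquiv A B → TyEquiv (.all X A) (.all X B)

/-- Auxiliary for PF: turn ∀X⃗.(C ⇒ Y) into ∀X⃗.((A ∧ C) ⇒ Y). -/
def pushArr (A : Ty) : Ty → Ty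
  | .all X t => .all X (pushArr A t)
  | .arr C Y => .arr (.conj A C) Y
  | t => t

/-- Multiset of prime factors of a type. -/
def PF : Ty → Multiset Ty
  | .var X => {.var X}
  | .arr A B => (PF B).map (pushArr A)
  | .conj A B => PF A + PF B
  | .all X A => (PF A).map (.all X)

/-- Being of the form ∀X₁...∀Xₙ.(B ⇒ Y) with Y a type variable. -/
inductive IsPrimeForm : Ty → Prop
  | base (B Y) : IsPrimeForm (.arr B (.var Y))
  | step (X) {t} : IsPrimeForm t → IsPrimeForm (.all X t)

/-- Conjunction of a (nonempty) list of types, A₁ ∧ ... ∧ Aₙ. -/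
def conjList : List Ty → Ty
  | [] => .var 0
  | [A] => A
  | A :: l => .conj A (conjList l)

/-- ∀X₁...∀Xₙ.A -/
def allList (l : List ℕ) (A : Ty) : Ty := l.foldr .all A

/-- Substitution of a type for a type variable in a type. -/
def substTy (X : ℕ) (B : Ty) : Ty → Ty
  | .var Y => if Y = X then B else .var Y
  | .arr C D => .arr (substTy X B C) (substTy X B D)
  | .conj C D => .conj (substTy X B C) (substTy X B D)
  | .all Y C => if Y = X then .all Y C else .all Y (substTy X B C)

/-- Terms of PSI (Church style). -/
inductive Tm : Type
  | var : ℕ → Ty → Tm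
  | lam : ℕ → Ty → Tm → Tm
  | app : Tm → Tm → Tm
  | pair : Tm → Tm → Tm
  | proj : Ty → Tm → Tm
  | tlam : ℕ → Tm → Tm
  | tapp : Tm → Ty → Tm

/-- Substitution of a term for a term variable. -/
def substTm (x : ℕ) (s : Tm) : Tm → Tm
  | .var y A => if y = x then s else .var y A
  | .lam y A r => if y = x then .lam y A r else .lam y A (substTm x s r)
  | .app r t => .app (substTm x s r) (substTm x s t)
  | .pair r t => .pair (substTm x s r) (substTm x s t)
  | .proj A r => .proj A (substTm x s r)
  | .tlam X r => .tlam X (substTm x s r)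
  | .tapp r A => .tapp (substTm x s r) A

/-- Substitution of a type for a type variable in a term. -/
def substTyTm (X : ℕ) (B : Ty) : Tm → Tm
  | .var y A => .var y (substTy X B A)
  | .lam y A r => .lam y (substTy X B A) (substTyTm X B r)
  | .app r t => .app (substTyTm X B r) (substTyTm X B t)
  | .pair r t => .pair (substTyTm X B r) (substTyTm X B t)
  | .proj A r => .proj (substTy X B A) (substTyTm X B r)
  | .tlam Y r => if Y = X then .tlam Y r else .tlam Y (substTyTm X B r)
  | .tapp r A => .tapp (substTyTm X B r) (substTy X B A)

abbrev Ctx := List (ℕ × Ty)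

def ftvCtx (Γ : Ctx) : Finset ℕ := Γ.foldr (fun p s => ftv p.2 ∪ s) ∅

def substCtx (X : ℕ) (B : Ty) (Γ : Ctx) : Ctx := Γ.map (fun p => (p.1, substTy X B p.2))

/-- Typing relation of PSI. -/
inductive Typing : Ctx → Tm → Ty → Prop
  | ax {Γ x A} : (x, A) ∈ Γ → Typing Γ (.var x A) A
  | equiv {Γ r A B} : Typing Γ r A → TyEquiv A B → Typing Γ r B
  | arrI {Γ x A r B} : Typing ((x, A) :: Γ) r B → Typing Γ (.lam x A r) (.arr A B)
  | arrE {Γ r s A B} : Typing Γ r (.arr A B) → Typing Γ s A → Typing Γ (.app r s) B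
  | conjI {Γ r s A B} : Typing Γ r A → Typing Γ s B → Typing Γ (.pair r s) (.conj A B)
  | conjE {Γ r A B} : Typing Γ r (.conj A B) → Typing Γ (.proj A r) A
  | allI {Γ r X A} : Typing Γ r A → X ∉ ftvCtx Γ → Typing Γ (.tlam X r) (.all X A)
  | allE {Γ r X A B} : Typing Γ r (.all X A) → Typing Γ (.tapp r B) (substTy X B A)

/-- "r has type A" (context is redundant in Church style). -/
def HasTy (r : Tm) (A : Ty) : Prop := ∃ Γ, Typing Γ r A

/-- One-step structural equivalence ⇄ (symmetric, closed under all term contexts). -/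
inductive StEq : Tm → Tm → Prop
  | comm (r s) : StEq (.pair r s) (.pair s r)
  | assoc (r s t) : StEq (.pair r (.pair s t)) (.pair (.pair r s) t)
  | distLam (x A r s) : StEq (.lam x A (.pair r s)) (.pair (.lam x A r) (.lam x A s))
  | distApp (r s t) : StEq (.app (.pair r s) t) (.pair (.app r t) (.app s t))
  | curry (r s t) : StEq (.app r (.pair s t)) (.app (.app r s) t)
  | pcommII (X x A r) : X ∉ ftv A → StEq (.tlam X (.lam x A r)) (.lam x A (.tlam X r))
  | pcommEI (X x A B r) : X ∉ ftv A → StEq (.tapp (.lam x A r) B) (.lam x A (.tapp r B))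
  | pdistII (X r s) : StEq (.tlam X (.pair r s)) (.pair (.tlam X r) (.tlam X s))
  | pdistEI (r s A) : StEq (.tapp (.pair r s) A) (.pair (.tapp r A) (.tapp s A))
  | pdistIE (X A r) : StEq (.proj (.all X A) (.tlam X r)) (.tlam X (.proj A r))
  | pdistEE (X A B C r) : HasTy r (.all X (.conj B C)) →
      StEq (.tapp (.proj (.all X B) r) A) (.proj (substTy X A B) (.tapp r A))
  | symm {r s} : StEq r s → StEq s r
  | congLam (x A) {r s} : StEq r s → StEq (.lam x A r) (.lam x A s)
  | congAppL (t) {r s} : StEq r s → StEq (.app r t) (.app s t)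
  | congAppR (t) {r s} : StEq r s → StEq (.app t r) (.app t s)
  | congPairL (t) {r s} : StEq r s → StEq (.pair r t) (.pair s t)
  | congPairR (t) {r s} : StEq r s → StEq (.pair t r) (.pair t s)
  | congProj (A) {r s} : StEq r s → StEq (.proj A r) (.proj A s)
  | congTlam (X) {r s} : StEq r s → StEq (.tlam X r) (.tlam X s)
  | congTapp (A) {r s} : StEq r s → StEq (.tapp r A) (.tapp s A)

/-- One-step reduction ↪ (typed β-reductions and typed projection, closed under contexts). -/
inductive Red : Tm → Tm → Prop
  | beta (x A r s) : HasTy s A → Red (.app (.lam x A r) s) (substTm x s r)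
  | tbeta (X A r) : Red (.tapp (.tlam X r) A) (substTyTm X A r)
  | pi (A r s) : HasTy r A → Red (.proj A (.pair r s)) r
  | congLam (x A) {r s} : Red r s → Red (.lam x A r) (.lam x A s)
  | congAppL (t) {r s} : Red r s → Red (.app r t) (.app s t)
  | congAppR (t) {r s} : Red r s → Red (.app t r) (.app t s)
  | congPairL (t) {r s} : Red r s → Red (.pair r t) (.pair s t)
  | congPairR (t) {r s} : Red r s → Red (.pair t r) (.pair t s)
  | congProj (A) {r s} : Red r s → Red (.proj A r) (.proj A s)
  | congTlam (X) {r s} : Red r s → Red (.tlam X r) (.tlam X s)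
  | congTapp (A) {r s} : Red r s → Red (.tapp r A) (.tapp s A)

/-- ⇄*: reflexive-transitive closure of ⇄. -/
def SeqStar : Tm → Tm → Prop := Relation.ReflTransGen StEq

/-- The operational semantics → = ⇄* ∘ ↪ ∘ ⇄*. -/
def Step (r s : Tm) : Prop := ∃ r' s', SeqStar r r' ∧ Red r' s' ∧ SeqStar s' s

/-- Strong normalisation with respect to →. -/
def SN (r : Tm) : Prop := Acc (fun a b => Step b a) r

/-- The measure P on terms. -/
def Pm : Tm → ℕ
  | .var _ _ => 0
  | .lam _ _ r => Pm r
  | .app r _ => Pm r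
  | .pair r s => 1 + Pm r + Pm s
  | .proj _ r => Pm r
  | .tlam _ r => Pm r
  | .tapp r _ => Pm r

/-- The measure M on terms. -/
def Mm : Tm → ℕ
  | .var _ _ => 1
  | .lam _ _ r => 1 + Mm r + Pm r
  | .app r s => Mm r + Mm s + Pm r * Mm s
  | .pair r s => Mm r + Mm s
  | .proj _ r => 1 + Mm r + Pm r
  | .tlam _ r => 1 + Mm r + Pm r
  | .tapp r _ => 1 + Mm r + Pm r

section SNPairProof

open Relation

/-! ### Basic facts about `SeqStar`, `Step`, and `SN` -/

lemma ss_symm {a b : Tm} (h : SeqStar a b) : SeqStar b a := by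
  induction h with
  | refl => exact .refl
  | tail _ h ih => exact Relation.ReflTransGen.head h.symm ih

lemma ss_trans {a b c : Tm} (h1 : SeqStar a b) (h2 : SeqStar b c) : SeqStar a c :=
  Relation.ReflTransGen.trans h1 h2

lemma ss_lift (f : Tm → Tm) (hf : ∀ {x y : Tm}, StEq x y → StEq (f x) (f y))
    {a b : Tm} (h : SeqStar a b) : SeqStar (f a) (f b) :=
  Relation.ReflTransGen.lift f (fun _ _ h => hf h) _ _ h

lemma ss_pair {a a' b b' : Tm} (ha : SeqStar a a') (hb : SeqStar b b') :
    SeqStar (.pair a b) (.pair a' b') :=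
  ss_trans (ss_lift (fun x => .pair x b) (fun h => StEq.congPairL _ h) ha)
    (ss_lift (fun x => .pair a' x) (fun h => StEq.congPairR _ h) hb)

lemma step_pre {a x y : Tm} (h : SeqStar a x) (hs : Step x y) : Step a y := by
  obtain ⟨u, v, h1, h2, h3⟩ := hs
  exact ⟨u, v, ss_trans h h1, h2, h3⟩

lemma step_post {x y b : Tm} (hs : Step x y) (h : SeqStar y b) : Step x b := by
  obtain ⟨u, v, h1, h2, h3⟩ := hs
  exact ⟨u, v, h1, h2, ss_trans h3 h⟩

lemma step_lift (f : Tm → Tm) (hfE : ∀ {x y : Tm}, StEq x y → StEq (f x) (f y))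
    (hfR : ∀ {x y : Tm}, Red x y → Red (f x) (f y))
    {a b : Tm} (h : Step a b) : Step (f a) (f b) := by
  obtain ⟨u, v, h1, h2, h3⟩ := h
  exact ⟨f u, f v, ss_lift f hfE h1, hfR h2, ss_lift f hfE h3⟩

lemma step_pairL {a b t : Tm} (h : Step a b) : Step (.pair a t) (.pair b t) :=
  step_lift (fun x => .pair x t) (fun h => StEq.congPairL _ h) (fun h => Red.congPairL _ h) h

lemma step_pairR {a b t : Tm} (h : Step a b) : Step (.pair t a) (.pair t b) :=
  step_lift (fun x => .pair t x) (fun h => StEq.congPairR _ h) (fun h => Red.congPairR _ h) h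

lemma tg_pre {a x y : Tm} (h : SeqStar a x) (hs : Relation.TransGen Step x y) :
    Relation.TransGen Step a y := by
  induction hs with
  | single h' => exact .single (step_pre h h')
  | tail _ h' ih => exact .tail ih h'

lemma tg_post {x y z : Tm} (hs : Relation.TransGen Step x y) (h : SeqStar y z) :
    Relation.TransGen Step x z := by
  cases hs with
  | single h' => exact .single (step_post h' h)
  | tail h1 h' => exact .tail' h1.to_reflTransGen (step_post h' h)

/-- Combined steps-or-structural-equivalences. -/
def Reach (a b : Tm) : Prop := Relation.ReflTransGen (fun x y => Step x y ∨ StEq x y) a b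

lemma reach_of_ss {a b : Tm} (h : SeqStar a b) : Reach a b :=
  Relation.ReflTransGen.mono (fun _ _ h => Or.inr h) _ _ h

lemma reach_of_steps {a b : Tm} (h : Relation.ReflTransGen Step a b) : Reach a b :=
  Relation.ReflTransGen.mono (fun _ _ h => Or.inl h) _ _ h

lemma reach_trans {a b c : Tm} (h1 : Reach a b) (h2 : Reach b c) : Reach a c :=
  Relation.ReflTransGen.trans h1 h2

lemma reach_pairL {a b t : Tm} (h : Reach a b) : Reach (.pair a t) (.pair b t) :=
  Relation.ReflTransGen.lift (fun x => Tm.pair x t)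
    (fun _ _ (h : Step _ _ ∨ StEq _ _) => h.elim (fun h => Or.inl (step_pairL h)) (fun h => Or.inr (StEq.congPairL _ h))) _ _ h

lemma reach_pairR {a b t : Tm} (h : Reach a b) : Reach (.pair t a) (.pair t b) :=
  Relation.ReflTransGen.lift (fun x => Tm.pair t x)
    (fun _ _ (h : Step _ _ ∨ StEq _ _) => h.elim (fun h => Or.inl (step_pairR h)) (fun h => Or.inr (StEq.congPairR _ h))) _ _ h

lemma sn_step {a b : Tm} (h : SN a) (hs : Step a b) : SN b := h.inv hs

lemma sn_steq {a b : Tm} (h : SN a) (he : StEq a b) : SN b :=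
  ⟨b, fun _ ht => h.inv (step_pre (Relation.ReflTransGen.single he) ht)⟩

lemma sn_reach {a b : Tm} (h : SN a) (hr : Reach a b) : SN b := by
  induction hr with
  | refl => exact h
  | tail _ h' ih => exact h'.elim (fun h' => sn_step ih h') (fun h' => sn_steq ih h')

/-- Accessibility for the transitive closure of `Step`, flipped. -/
def AccT (a : Tm) : Prop := Acc (fun x y => Relation.TransGen Step y x) a

lemma accT_of_sn {a : Tm} (h : SN a) : AccT a := by
  have h' : Acc (Relation.TransGen fun x y => Step y x) a := h.transGen
  refine Subrelation.accessible ?_ h'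
  intro x y hxy
  exact (Relation.transGen_swap).mpr hxy

lemma accT_tg {a b : Tm} (h : AccT a) (hs : Relation.TransGen Step a b) : AccT b := h.inv hs

lemma accT_steq {a b : Tm} (h : AccT a) (he : StEq a b) : AccT b :=
  ⟨b, fun _ ht => h.inv (tg_pre (Relation.ReflTransGen.single he) ht)⟩

lemma accT_reach {a b : Tm} (h : AccT a) (hr : Reach a b) : AccT b := by
  induction hr with
  | refl => exact h
  | tail _ h' ih =>
    exact h'.elim (fun h' => accT_tg ih (.single h')) (fun h' => accT_steq ih h')

end SNPairProof
section SNPairProof2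
open Relation

/-- The multiset of prime components of a term: maximal decomposition of a term into
non-pair components along the `lam/app/tlam/tapp` spine. -/
def comps : Tm → Multiset Tm
  | .var x A => {.var x A}
  | .lam x A r => (comps r).map (.lam x A)
  | .app r t => (comps r).map (fun c => .app c t)
  | .pair r s => comps r + comps s
  | .proj A r => {.proj A r}
  | .tlam X r => (comps r).map (.tlam X)
  | .tapp r A => (comps r).map (fun c => .tapp c A)

lemma comps_ne_zero (t : Tm) : comps t ≠ 0 := by
  induction t with
  | var x A => simp [comps]
  | lam x A r ih => simp [comps, Multiset.map_eq_zero]; exact ih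
  | app r s ih _ => simp [comps, Multiset.map_eq_zero]; exact ih
  | pair r s ih1 ih2 =>
    intro h
    obtain ⟨c, hc⟩ := Multiset.exists_mem_of_ne_zero ih1
    have hm : c ∈ comps (r.pair s) := Multiset.mem_add.mpr (Or.inl hc)
    rw [h] at hm
    simp at hm
  | proj A r _ => simp [comps]
  | tlam X r ih => simp [comps, Multiset.map_eq_zero]; exact ih
  | tapp r A ih => simp [comps, Multiset.map_eq_zero]; exact ih

lemma comps_prime {t : Tm} : ∀ c ∈ comps t, comps c = {c} := by
  induction t with
  | var x A => intro c hc; simp [comps] at hc; subst hc; simp [comps]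
  | lam x A r ih =>
    intro c hc; simp [comps] at hc; obtain ⟨d, hd, rfl⟩ := hc
    simp [comps, ih d hd]
  | app r s ih _ =>
    intro c hc; simp [comps] at hc; obtain ⟨d, hd, rfl⟩ := hc
    simp [comps, ih d hd]
  | pair r s ih1 ih2 =>
    intro c hc; simp [comps] at hc
    rcases hc with hc | hc
    · exact ih1 c hc
    · exact ih2 c hc
  | proj A r _ => intro c hc; simp [comps] at hc; subst hc; simp [comps]
  | tlam X r ih =>
    intro c hc; simp [comps] at hc; obtain ⟨d, hd, rfl⟩ := hc
    simp [comps, ih d hd]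
  | tapp r A ih =>
    intro c hc; simp [comps] at hc; obtain ⟨d, hd, rfl⟩ := hc
    simp [comps, ih d hd]

lemma comps_substTyTm (X : ℕ) (B : Ty) (t : Tm) :
    comps (substTyTm X B t) = (comps t).map (substTyTm X B) := by
  induction t with
  | var x A => simp [comps, substTyTm]
  | lam x A r ih =>
    simp [comps, substTyTm, ih, Multiset.map_map]
    try rfl
  | app r s ih _ =>
    simp [comps, substTyTm, ih, Multiset.map_map]
    try rfl
  | pair r s ih1 ih2 => simp [comps, substTyTm, ih1, ih2]
  | proj A r _ => simp [comps, substTyTm]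
  | tlam Y r ih =>
    by_cases h : Y = X
    · subst h
      simp only [substTyTm, if_pos rfl, comps, Multiset.map_map]
      refine (Multiset.map_congr rfl ?_).symm
      intro c _; simp [substTyTm, Function.comp]
    · simp only [substTyTm, if_neg h, comps, ih, Multiset.map_map]
      apply Multiset.map_congr rfl
      intro c _; simp [substTyTm, h, Function.comp]
  | tapp r A ih =>
    simp [comps, substTyTm, ih, Multiset.map_map]
    try rfl

lemma comps_substTm (x : ℕ) (s : Tm) (t : Tm) :
    comps (substTm x s t) = (comps t).bind (fun c => comps (substTm x s c)) := by
  induction t with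
  | var y A =>
    by_cases h : y = x <;> simp [comps, substTm, h]
  | lam y A r ih =>
    by_cases h : y = x
    · subst h
      simp only [substTm, if_pos rfl, ↓reduceIte, comps]
      rw [Multiset.bind_map]
      rw [Multiset.bind_congr (g := fun c => ({Tm.lam y A c} : Multiset Tm)) ?_]
      · rw [Multiset.bind_singleton]
      · intro c hc
        simp [substTm, comps, comps_prime c hc]
    · simp only [substTm, h, if_neg h, ↓reduceIte, comps, ih]
      rw [Multiset.bind_map, Multiset.map_bind]
      apply Multiset.bind_congr
      intro c _; simp [substTm, h, comps]
  | app r w ih _ =>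
    simp only [substTm, comps, ih]
    rw [Multiset.bind_map, Multiset.map_bind]
    apply Multiset.bind_congr
    intro c _; simp [substTm, comps]
  | pair r w ih1 ih2 =>
    simp [substTm, comps, ih1, ih2, Multiset.add_bind]
  | proj A r _ =>
    simp [substTm, comps]
  | tlam X r ih =>
    simp only [substTm, comps, ih]
    rw [Multiset.bind_map, Multiset.map_bind]
    apply Multiset.bind_congr
    intro c _; simp [substTm, comps]
  | tapp r A ih =>
    simp only [substTm, comps, ih]
    rw [Multiset.bind_map, Multiset.map_bind]
    apply Multiset.bind_congr
    intro c _; simp [substTm, comps]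

end SNPairProof2
section SNPairProof3
open Relation

abbrev MRel (M N : Multiset Tm) : Prop := Multiset.Rel SeqStar M N

lemma mrel_refl (M : Multiset Tm) : MRel M M := by
  induction M using Multiset.induction with
  | empty => exact Multiset.Rel.zero
  | cons a M ih => exact Multiset.Rel.cons .refl ih

lemma mrel_of_eq {M N : Multiset Tm} (h : M = N) : MRel M N := h ▸ mrel_refl M

lemma mrel_symm {M N : Multiset Tm} (h : MRel M N) : MRel N M := by
  induction h with
  | zero => exact Multiset.Rel.zero
  | cons hab _ ih => exact Multiset.Rel.cons (ss_symm hab) ih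

lemma mrel_trans {M N P : Multiset Tm} (h1 : MRel M N) (h2 : MRel N P) : MRel M P := by
  induction h1 generalizing P with
  | zero =>
    cases (Multiset.rel_zero_left.mp h2)
    exact Multiset.Rel.zero
  | @cons a b M N hab _ ih =>
    obtain ⟨c, P', hbc, hNP', rfl⟩ := Multiset.rel_cons_left.mp h2
    exact Multiset.Rel.cons (ss_trans hab hbc) (ih hNP')

/-- Pointwise relation between two maps of the same multiset. -/
lemma mrel_map_map {α : Type*} {M : Multiset α} {f g : α → Tm}
    (h : ∀ c ∈ M, SeqStar (f c) (g c)) :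
    MRel (M.map f) (M.map g) := by
  refine Multiset.rel_map_left.mpr (Multiset.rel_map_right.mpr ?_)
  induction M using Multiset.induction with
  | empty => exact Multiset.Rel.zero
  | cons a M ih =>
    exact Multiset.Rel.cons (h a (Multiset.mem_cons_self a M))
      (ih (fun c hc => h c (Multiset.mem_cons_of_mem hc)))

/-- Lemma L1: `comps` is invariant under one-step structural equivalence,
up to pointwise `SeqStar`. -/
lemma comps_steq {t u : Tm} (h : StEq t u) : MRel (comps t) (comps u) := by
  induction h with
  | comm r s => exact mrel_of_eq (by simp [comps, add_comm])
  | assoc r s w => exact mrel_of_eq (by simp [comps, add_assoc])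
  | distLam x A r s => exact mrel_of_eq (by simp [comps])
  | distApp r s w => exact mrel_of_eq (by simp [comps])
  | curry r s w =>
    simp only [comps, Multiset.map_map]
    exact mrel_map_map (fun c _ => Relation.ReflTransGen.single (StEq.curry c s w))
  | pcommII X x A r hX =>
    simp only [comps, Multiset.map_map]
    exact mrel_map_map (fun c _ => Relation.ReflTransGen.single (StEq.pcommII X x A c hX))
  | pcommEI X x A B r hX =>
    simp only [comps, Multiset.map_map]
    exact mrel_map_map (fun c _ => Relation.ReflTransGen.single (StEq.pcommEI X x A B c hX))
  | pdistII X r s => exact mrel_of_eq (by simp [comps])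
  | pdistEI r s A => exact mrel_of_eq (by simp [comps])
  | pdistIE X A r =>
    simp only [comps, Multiset.map_singleton]
    exact Multiset.Rel.cons (Relation.ReflTransGen.single (StEq.pdistIE X A r)) Multiset.Rel.zero
  | pdistEE X A B C r hty =>
    simp only [comps, Multiset.map_singleton]
    exact Multiset.Rel.cons (Relation.ReflTransGen.single (StEq.pdistEE X A B C r hty))
      Multiset.Rel.zero
  | symm _ ih => exact mrel_symm ih
  | congLam x A _ ih =>
    simp only [comps]
    exact Multiset.rel_map_left.mpr (Multiset.rel_map_right.mpr <| ih.mono (fun a _ b _ hab => ss_lift (Tm.lam x A) (fun h => StEq.congLam x A h) hab))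
  | congAppL w _ ih =>
    simp only [comps]
    exact Multiset.rel_map_left.mpr (Multiset.rel_map_right.mpr <| ih.mono (fun a _ b _ hab => ss_lift (fun c => Tm.app c w) (fun h => StEq.congAppL w h) hab))
  | congAppR w hrs ih =>
    simp only [comps]
    exact mrel_map_map (fun c _ => ss_lift (fun z => Tm.app c z) (fun h => StEq.congAppR c h)
      (Relation.ReflTransGen.single hrs))
  | congPairL w _ ih =>
    simp only [comps]
    exact Multiset.Rel.add ih (mrel_refl _)
  | congPairR w _ ih =>
    simp only [comps]
    exact Multiset.Rel.add (mrel_refl _) ih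
  | congProj A hrs ih =>
    simp only [comps]
    exact Multiset.Rel.cons (Relation.ReflTransGen.single (StEq.congProj A hrs)) Multiset.Rel.zero
  | congTlam X _ ih =>
    simp only [comps]
    exact Multiset.rel_map_left.mpr (Multiset.rel_map_right.mpr <| ih.mono (fun a _ b _ hab => ss_lift (Tm.tlam X) (fun h => StEq.congTlam X h) hab))
  | congTapp A _ ih =>
    simp only [comps]
    exact Multiset.rel_map_left.mpr (Multiset.rel_map_right.mpr <| ih.mono (fun a _ b _ hab => ss_lift (fun c => Tm.tapp c A) (fun h => StEq.congTapp A h) hab))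

lemma comps_seqstar {t u : Tm} (h : SeqStar t u) : MRel (comps t) (comps u) := by
  induction h with
  | refl => exact mrel_refl _
  | tail _ h ih => exact mrel_trans ih (comps_steq h)

end SNPairProof3
section SNPairProof4
open Relation

/-- Lemma L3: a one-step reduction acts componentwise on `comps`:
each component either reduces (possibly splitting into several new components)
or stays put, and at least one component genuinely reduces. -/
lemma comps_red {u v : Tm} (h : Red u v) :
    ∃ C : Multiset (Tm × Tm),
      C.map Prod.fst = comps u ∧
      C.bind (fun p => comps p.2) = comps v ∧
      (∀ p ∈ C, Red p.1 p.2 ∨ p.1 = p.2) ∧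
      (∃ p ∈ C, Red p.1 p.2) := by
  induction h with
  | beta x A r s hty =>
    refine ⟨(comps r).map (fun c => (Tm.app (Tm.lam x A c) s, substTm x s c)), ?_, ?_, ?_, ?_⟩
    · simp [comps, Multiset.map_map]
    · rw [Multiset.bind_map]
      exact (comps_substTm x s r).symm
    · intro p hp
      simp only [Multiset.mem_map] at hp
      obtain ⟨c, _, rfl⟩ := hp
      exact Or.inl (Red.beta x A c s hty)
    · obtain ⟨c, hc⟩ := Multiset.exists_mem_of_ne_zero (comps_ne_zero r)
      exact ⟨_, Multiset.mem_map_of_mem _ hc, Red.beta x A c s hty⟩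
  | tbeta X A r =>
    refine ⟨(comps r).map (fun c => (Tm.tapp (Tm.tlam X c) A, substTyTm X A c)), ?_, ?_, ?_, ?_⟩
    · simp [comps, Multiset.map_map]
    · rw [Multiset.bind_map, comps_substTyTm]
      rw [Multiset.bind_congr (g := fun c => ({substTyTm X A c} : Multiset Tm)) ?_]
      · rw [Multiset.bind_singleton]
      · intro c hc
        rw [comps_substTyTm, comps_prime c hc, Multiset.map_singleton]
    · intro p hp
      simp only [Multiset.mem_map] at hp
      obtain ⟨c, _, rfl⟩ := hp
      exact Or.inl (Red.tbeta X A c)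
    · obtain ⟨c, hc⟩ := Multiset.exists_mem_of_ne_zero (comps_ne_zero r)
      exact ⟨_, Multiset.mem_map_of_mem _ hc, Red.tbeta X A c⟩
  | pi A r s hty =>
    refine ⟨{(Tm.proj A (Tm.pair r s), r)}, by simp [comps], by simp, ?_, ?_⟩
    · intro p hp; simp at hp; subst hp; exact Or.inl (Red.pi A r s hty)
    · exact ⟨_, Multiset.mem_singleton_self _, Red.pi A r s hty⟩
  | congLam x A hrs ih =>
    obtain ⟨C, h1, h2, h3, h4⟩ := ih
    refine ⟨C.map (fun p => (Tm.lam x A p.1, Tm.lam x A p.2)), ?_, ?_, ?_, ?_⟩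
    · rw [Multiset.map_map]
      show C.map (fun p => Tm.lam x A p.1) = _
      rw [show (fun p : Tm × Tm => Tm.lam x A p.1) = (Tm.lam x A ∘ Prod.fst) from rfl,
        ← Multiset.map_map, h1]
      simp [comps]
    · rw [Multiset.bind_map]
      show C.bind (fun p => comps (Tm.lam x A p.2)) = _
      calc C.bind (fun p => comps (Tm.lam x A p.2))
          = C.bind (fun p => (comps p.2).map (Tm.lam x A)) := rfl
        _ = ((C.bind fun p => comps p.2)).map (Tm.lam x A) := (Multiset.map_bind _ _ _).symm
        _ = _ := by rw [h2]; simp [comps]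
    · intro p hp
      simp only [Multiset.mem_map] at hp
      obtain ⟨q, hq, rfl⟩ := hp
      rcases h3 q hq with h | h
      · exact Or.inl (Red.congLam x A h)
      · exact Or.inr (by rw [h])
    · obtain ⟨q, hq, hred⟩ := h4
      exact ⟨_, Multiset.mem_map_of_mem _ hq, Red.congLam x A hred⟩
  | congAppL t hrs ih =>
    obtain ⟨C, h1, h2, h3, h4⟩ := ih
    refine ⟨C.map (fun p => (Tm.app p.1 t, Tm.app p.2 t)), ?_, ?_, ?_, ?_⟩
    · rw [Multiset.map_map]
      show C.map (fun p => Tm.app p.1 t) = _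
      rw [show (fun p : Tm × Tm => Tm.app p.1 t) = ((fun c => Tm.app c t) ∘ Prod.fst) from rfl,
        ← Multiset.map_map, h1]
      simp [comps]
    · rw [Multiset.bind_map]
      show C.bind (fun p => comps (Tm.app p.2 t)) = _
      calc C.bind (fun p => comps (Tm.app p.2 t))
          = C.bind (fun p => (comps p.2).map (fun c => Tm.app c t)) := rfl
        _ = ((C.bind fun p => comps p.2)).map (fun c => Tm.app c t) := (Multiset.map_bind _ _ _).symm
        _ = _ := by rw [h2]; simp [comps]
    · intro p hp
      simp only [Multiset.mem_map] at hp
      obtain ⟨q, hq, rfl⟩ := hp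
      rcases h3 q hq with h | h
      · exact Or.inl (Red.congAppL t h)
      · exact Or.inr (by rw [h])
    · obtain ⟨q, hq, hred⟩ := h4
      exact ⟨_, Multiset.mem_map_of_mem _ hq, Red.congAppL t hred⟩
  | @congAppR t r s hrs ih =>
    refine ⟨(comps t).map (fun c => (Tm.app c r, Tm.app c s)), ?_, ?_, ?_, ?_⟩
    · rw [Multiset.map_map]; rfl
    · rw [Multiset.bind_map]
      rw [Multiset.bind_congr (g := fun c => ({Tm.app c s} : Multiset Tm)) ?_]
      · rw [Multiset.bind_singleton]; rfl
      · intro c hc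
        show comps (Tm.app c s) = _
        rw [show comps (Tm.app c s) = (comps c).map (fun d => Tm.app d s) from rfl,
          comps_prime c hc, Multiset.map_singleton]
    · intro p hp
      simp only [Multiset.mem_map] at hp
      obtain ⟨c, _, rfl⟩ := hp
      exact Or.inl (Red.congAppR c hrs)
    · obtain ⟨c, hc⟩ := Multiset.exists_mem_of_ne_zero (comps_ne_zero t)
      exact ⟨_, Multiset.mem_map_of_mem _ hc, Red.congAppR c hrs⟩
  | congPairL t hrs ih =>
    obtain ⟨C, h1, h2, h3, h4⟩ := ih
    refine ⟨C + (comps t).map (fun c => (c, c)), ?_, ?_, ?_, ?_⟩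
    · rw [Multiset.map_add, h1, Multiset.map_map]
      show _ = comps _ + comps _
      congr 1
      rw [show (Prod.fst ∘ fun c : Tm => (c, c)) = id from rfl, Multiset.map_id]
    · rw [Multiset.add_bind, h2, Multiset.bind_map]
      show _ = comps _ + comps _
      congr 1
      rw [Multiset.bind_congr (g := fun c => ({c} : Multiset Tm))
        (fun c hc => comps_prime c hc), Multiset.bind_singleton]
      exact Multiset.map_congr rfl (fun c _ => rfl) |>.trans (Multiset.map_id _)
    · intro p hp
      rcases Multiset.mem_add.mp hp with hp | hp
      · exact h3 p hp
      · simp only [Multiset.mem_map] at hp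
        obtain ⟨c, _, rfl⟩ := hp
        exact Or.inr rfl
    · obtain ⟨q, hq, hred⟩ := h4
      exact ⟨q, Multiset.mem_add.mpr (Or.inl hq), hred⟩
  | congPairR t hrs ih =>
    obtain ⟨C, h1, h2, h3, h4⟩ := ih
    refine ⟨(comps t).map (fun c => (c, c)) + C, ?_, ?_, ?_, ?_⟩
    · rw [Multiset.map_add, h1, Multiset.map_map]
      show _ = comps _ + comps _
      congr 1
      rw [show (Prod.fst ∘ fun c : Tm => (c, c)) = id from rfl, Multiset.map_id]
    · rw [Multiset.add_bind, h2, Multiset.bind_map]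
      show _ = comps _ + comps _
      congr 1
      rw [Multiset.bind_congr (g := fun c => ({c} : Multiset Tm))
        (fun c hc => comps_prime c hc), Multiset.bind_singleton]
      exact Multiset.map_congr rfl (fun c _ => rfl) |>.trans (Multiset.map_id _)
    · intro p hp
      rcases Multiset.mem_add.mp hp with hp | hp
      · simp only [Multiset.mem_map] at hp
        obtain ⟨c, _, rfl⟩ := hp
        exact Or.inr rfl
      · exact h3 p hp
    · obtain ⟨q, hq, hred⟩ := h4
      exact ⟨q, Multiset.mem_add.mpr (Or.inr hq), hred⟩
  | @congProj A r s hrs ih =>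
    refine ⟨{(Tm.proj A r, Tm.proj A s)}, by simp [comps], by simp [comps], ?_, ?_⟩
    · intro p hp; simp at hp; subst hp; exact Or.inl (Red.congProj A hrs)
    · exact ⟨_, Multiset.mem_singleton_self _, Red.congProj A hrs⟩
  | congTlam X hrs ih =>
    obtain ⟨C, h1, h2, h3, h4⟩ := ih
    refine ⟨C.map (fun p => (Tm.tlam X p.1, Tm.tlam X p.2)), ?_, ?_, ?_, ?_⟩
    · rw [Multiset.map_map]
      show C.map (fun p => Tm.tlam X p.1) = _
      rw [show (fun p : Tm × Tm => Tm.tlam X p.1) = (Tm.tlam X ∘ Prod.fst) from rfl,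
        ← Multiset.map_map, h1]
      simp [comps]
    · rw [Multiset.bind_map]
      show C.bind (fun p => comps (Tm.tlam X p.2)) = _
      calc C.bind (fun p => comps (Tm.tlam X p.2))
          = C.bind (fun p => (comps p.2).map (Tm.tlam X)) := rfl
        _ = ((C.bind fun p => comps p.2)).map (Tm.tlam X) := (Multiset.map_bind _ _ _).symm
        _ = _ := by rw [h2]; simp [comps]
    · intro p hp
      simp only [Multiset.mem_map] at hp
      obtain ⟨q, hq, rfl⟩ := hp
      rcases h3 q hq with h | h
      · exact Or.inl (Red.congTlam X h)
      · exact Or.inr (by rw [h])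
    · obtain ⟨q, hq, hred⟩ := h4
      exact ⟨_, Multiset.mem_map_of_mem _ hq, Red.congTlam X hred⟩
  | congTapp A hrs ih =>
    obtain ⟨C, h1, h2, h3, h4⟩ := ih
    refine ⟨C.map (fun p => (Tm.tapp p.1 A, Tm.tapp p.2 A)), ?_, ?_, ?_, ?_⟩
    · rw [Multiset.map_map]
      show C.map (fun p => Tm.tapp p.1 A) = _
      rw [show (fun p : Tm × Tm => Tm.tapp p.1 A) = ((fun c => Tm.tapp c A) ∘ Prod.fst) from rfl,
        ← Multiset.map_map, h1]
      simp [comps]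
    · rw [Multiset.bind_map]
      show C.bind (fun p => comps (Tm.tapp p.2 A)) = _
      calc C.bind (fun p => comps (Tm.tapp p.2 A))
          = C.bind (fun p => (comps p.2).map (fun c => Tm.tapp c A)) := rfl
        _ = ((C.bind fun p => comps p.2)).map (fun c => Tm.tapp c A) := (Multiset.map_bind _ _ _).symm
        _ = _ := by rw [h2]; simp [comps]
    · intro p hp
      simp only [Multiset.mem_map] at hp
      obtain ⟨q, hq, rfl⟩ := hp
      rcases h3 q hq with h | h
      · exact Or.inl (Red.congTapp A h)
      · exact Or.inr (by rw [h])
    · obtain ⟨q, hq, hred⟩ := h4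
      exact ⟨_, Multiset.mem_map_of_mem _ hq, Red.congTapp A hred⟩

end SNPairProof4
section SNPairProof5
open Relation

/-- Rebuild a (nonempty) list of terms into an iterated pair. -/
def rb : List Tm → Tm
  | [] => .var 0 (.var 0)
  | [a] => a
  | a :: l => .pair a (rb l)

lemma rb_cons {a : Tm} {l : List Tm} (h : l ≠ []) : rb (a :: l) = .pair a (rb l) := by
  cases l with
  | nil => exact absurd rfl h
  | cons b m => rfl

lemma rb_append {L1 L2 : List Tm} (h1 : L1 ≠ []) (h2 : L2 ≠ []) :
    SeqStar (rb (L1 ++ L2)) (.pair (rb L1) (rb L2)) := by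
  induction L1 with
  | nil => exact absurd rfl h1
  | cons a l ih =>
    by_cases hl : l = []
    · subst hl
      rw [List.singleton_append, rb_cons h2]
      exact .refl
    · rw [List.cons_append, rb_cons (by simp [hl]), rb_cons hl]
      refine ss_trans (ss_lift (fun z => Tm.pair a z) (fun h => StEq.congPairR _ h) (ih hl)) ?_
      exact Relation.ReflTransGen.single (StEq.assoc a (rb l) (rb L2))

lemma rb_map_spine (K : Tm → Tm) (hK : ∀ a b, StEq (K (.pair a b)) (.pair (K a) (K b))) :
    ∀ {L : List Tm}, L ≠ [] → SeqStar (rb (L.map K)) (K (rb L)) := by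
  intro L
  induction L with
  | nil => exact fun h => absurd rfl h
  | cons a l ih =>
    intro _
    by_cases hl : l = []
    · subst hl; exact .refl
    · rw [List.map_cons, rb_cons (by simp [hl]), rb_cons hl]
      refine ss_trans (ss_lift (fun z => Tm.pair (K a) z) (fun h => StEq.congPairR _ h) (ih hl)) ?_
      exact Relation.ReflTransGen.single (StEq.symm (hK a (rb l)))

lemma rb_perm : ∀ {L L' : List Tm}, L.Perm L' → SeqStar (rb L) (rb L') := by
  intro L L' h
  induction h with
  | nil => exact .refl
  | @cons x l l' h ih =>
    by_cases hl : l = []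
    · subst hl
      rw [List.Perm.eq_nil h.symm]
      exact .refl
    · have hl' : l' ≠ [] := fun hh => hl (List.Perm.eq_nil (hh ▸ h))
      rw [rb_cons hl, rb_cons hl']
      exact ss_pair .refl ih
  | @swap x y l =>
    by_cases hl : l = []
    · subst hl
      exact Relation.ReflTransGen.single (StEq.comm y x)
    · have e1 : rb (y :: x :: l) = Tm.pair y (rb (x :: l)) := rb_cons (by simp)
      have e2 : rb (x :: y :: l) = Tm.pair x (rb (y :: l)) := rb_cons (by simp)
      rw [e1, e2, rb_cons hl, rb_cons hl]
      refine ss_trans (Relation.ReflTransGen.single (StEq.assoc y x (rb l))) ?_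
      refine ss_trans (Relation.ReflTransGen.single (StEq.congPairL _ (StEq.comm y x))) ?_
      exact Relation.ReflTransGen.single (StEq.symm (StEq.assoc x y (rb l)))
  | trans _ _ ih1 ih2 => exact ss_trans ih1 ih2

/-- Rebuild a multiset of terms. -/
noncomputable def rbm (M : Multiset Tm) : Tm := rb M.toList

lemma ss_rb_of_coe {L : List Tm} {M : Multiset Tm} (h : (↑L : Multiset Tm) = M) :
    SeqStar (rb L) (rbm M) := by
  refine rb_perm (Multiset.coe_eq_coe.mp ?_)
  rw [h, Multiset.coe_toList]

lemma rel_rbm : ∀ {M N : Multiset Tm}, MRel M N → SeqStar (rbm M) (rbm N) := by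
  intro M N h
  induction h with
  | zero => exact .refl
  | @cons a b M N hab hMN ih =>
    have hM : SeqStar (rb (a :: M.toList)) (rbm (a ::ₘ M)) :=
      ss_rb_of_coe (by rw [← Multiset.cons_coe, Multiset.coe_toList])
    have hN : SeqStar (rb (b :: N.toList)) (rbm (b ::ₘ N)) :=
      ss_rb_of_coe (by rw [← Multiset.cons_coe, Multiset.coe_toList])
    refine ss_trans (ss_symm hM) (ss_trans ?_ hN)
    by_cases hMz : M = 0
    · subst hMz
      have hNz : N = 0 := by
        have := Multiset.card_eq_card_of_rel hMN
        simpa using this.symm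
      subst hNz
      simpa [Multiset.toList_zero, rb] using hab
    · have hNz : N ≠ 0 := by
        intro hh
        subst hh
        exact hMz (by simpa using Multiset.card_eq_card_of_rel hMN)
      rw [rb_cons (by simpa [Multiset.toList_eq_nil] using hMz),
        rb_cons (by simpa [Multiset.toList_eq_nil] using hNz)]
      exact ss_pair hab ih

lemma rbm_add {M N : Multiset Tm} (hM : M ≠ 0) (hN : N ≠ 0) :
    SeqStar (rbm (M + N)) (.pair (rbm M) (rbm N)) := by
  have hcoe : (↑(M.toList ++ N.toList) : Multiset Tm) = M + N := by
    rw [← Multiset.coe_add, Multiset.coe_toList, Multiset.coe_toList]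
  refine ss_trans (ss_symm (ss_rb_of_coe hcoe)) ?_
  exact rb_append (by simpa [Multiset.toList_eq_nil] using hM)
    (by simpa [Multiset.toList_eq_nil] using hN)

lemma bind_ne_zero {α : Type*} {C : Multiset α} {g : α → Multiset Tm}
    (hC : C ≠ 0) (hg : ∀ a ∈ C, g a ≠ 0) : C.bind g ≠ 0 := by
  obtain ⟨a, ha⟩ := Multiset.exists_mem_of_ne_zero hC
  obtain ⟨x, hx⟩ := Multiset.exists_mem_of_ne_zero (hg a ha)
  intro h
  have : x ∈ C.bind g := Multiset.mem_bind.mpr ⟨a, ha, hx⟩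
  rw [h] at this
  simp at this

/-- Every term is structurally equivalent to the rebuilt pair of its components. -/
lemma ss_rbm_comps : ∀ t : Tm, SeqStar t (rbm (comps t)) := by
  intro t
  induction t with
  | var x A => exact ss_rb_of_coe (L := [Tm.var x A]) rfl
  | lam x A r ih =>
    refine ss_trans (ss_lift (Tm.lam x A) (fun h => StEq.congLam x A h) ih) ?_
    refine ss_trans (ss_symm (rb_map_spine (Tm.lam x A) (fun a b => StEq.distLam x A a b)
      (by simpa [Multiset.toList_eq_nil] using comps_ne_zero r))) ?_
    exact ss_rb_of_coe (by rw [← Multiset.map_coe, Multiset.coe_toList]; rfl)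
  | app r w ih _ =>
    refine ss_trans (ss_lift (fun c => Tm.app c w) (fun h => StEq.congAppL w h) ih) ?_
    refine ss_trans (ss_symm (rb_map_spine (fun c => Tm.app c w) (fun a b => StEq.distApp a b w)
      (by simpa [Multiset.toList_eq_nil] using comps_ne_zero r))) ?_
    exact ss_rb_of_coe (by rw [← Multiset.map_coe, Multiset.coe_toList]; rfl)
  | pair r s ih1 ih2 =>
    refine ss_trans (ss_pair ih1 ih2) ?_
    exact ss_symm (rbm_add (comps_ne_zero r) (comps_ne_zero s))
  | proj A r _ => exact ss_rb_of_coe (L := [Tm.proj A r]) rfl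
  | tlam X r ih =>
    refine ss_trans (ss_lift (Tm.tlam X) (fun h => StEq.congTlam X h) ih) ?_
    refine ss_trans (ss_symm (rb_map_spine (Tm.tlam X) (fun a b => StEq.pdistII X a b)
      (by simpa [Multiset.toList_eq_nil] using comps_ne_zero r))) ?_
    exact ss_rb_of_coe (by rw [← Multiset.map_coe, Multiset.coe_toList]; rfl)
  | tapp r A ih =>
    refine ss_trans (ss_lift (fun c => Tm.tapp c A) (fun h => StEq.congTapp A h) ih) ?_
    refine ss_trans (ss_symm (rb_map_spine (fun c => Tm.tapp c A) (fun a b => StEq.pdistEI a b A)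
      (by simpa [Multiset.toList_eq_nil] using comps_ne_zero r))) ?_
    exact ss_rb_of_coe (by rw [← Multiset.map_coe, Multiset.coe_toList]; rfl)

lemma rbm_bind {α : Type*} : ∀ (C : Multiset α) (g : α → Multiset Tm), C ≠ 0 →
    (∀ a ∈ C, g a ≠ 0) →
    SeqStar (rbm (C.bind g)) (rbm (C.map (fun a => rbm (g a)))) := by
  intro C
  induction C using Multiset.induction with
  | empty => exact fun g h => absurd rfl h
  | @cons a C ih =>
    intro g _ hg
    by_cases hC : C = 0
    · subst hC
      have e1 : (a ::ₘ (0 : Multiset α)).bind g = g a := by simp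
      have e2 : (a ::ₘ (0 : Multiset α)).map (fun b => rbm (g b)) = {rbm (g a)} := by simp
      rw [e1, e2]
      exact ss_rb_of_coe (L := [rbm (g a)]) rfl
    · have hga : g a ≠ 0 := hg a (Multiset.mem_cons_self a C)
      have hbind : C.bind g ≠ 0 := bind_ne_zero hC (fun b hb => hg b (Multiset.mem_cons_of_mem hb))
      have e1 : (a ::ₘ C).bind g = g a + C.bind g := by simp [Multiset.cons_bind]
      have e2 : (a ::ₘ C).map (fun b => rbm (g b)) = rbm (g a) ::ₘ C.map (fun b => rbm (g b)) := by
        simp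
      rw [e1, e2]
      refine ss_trans (rbm_add hga hbind) ?_
      refine ss_trans (ss_pair .refl (ih g hC (fun b hb => hg b (Multiset.mem_cons_of_mem hb)))) ?_
      have e3 : (rbm (g a) ::ₘ C.map (fun b => rbm (g b)))
          = ({rbm (g a)} : Multiset Tm) + C.map (fun b => rbm (g b)) := by
        simp [Multiset.singleton_add]
      rw [e3]
      refine ss_symm (ss_trans (rbm_add (by simp) (by
        simpa [Multiset.map_eq_zero] using hC)) ?_)
      refine ss_pair ?_ .refl
      exact ss_symm (ss_rb_of_coe (L := [rbm (g a)]) rfl)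

end SNPairProof5
section SNPairProof6
open Relation

lemma step_of_red {x y : Tm} (h : Red x y) : Step x y := ⟨x, y, .refl, h, .refl⟩

lemma rb_steps : ∀ (L : List (Tm × Tm)), L ≠ [] →
    (∀ p ∈ L, Red p.1 p.2 ∨ p.1 = p.2) →
    Relation.ReflTransGen Step (rb (L.map Prod.fst)) (rb (L.map Prod.snd)) ∧
    ((∃ p ∈ L, Red p.1 p.2) →
      Relation.TransGen Step (rb (L.map Prod.fst)) (rb (L.map Prod.snd))) := by
  intro L
  induction L with
  | nil => exact fun h => absurd rfl h
  | cons q l ih =>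
    intro _ hcond
    by_cases hl : l = []
    · subst hl
      simp only [List.map_cons, List.map_nil]
      rcases hcond q (List.mem_cons_self) with hred | heq
      · exact ⟨Relation.ReflTransGen.single (step_of_red hred),
          fun _ => Relation.TransGen.single (step_of_red hred)⟩
      · constructor
        · show Relation.ReflTransGen Step (rb [q.1]) (rb [q.2])
          rw [heq]
        · intro hex
          obtain ⟨p, hp, hpred⟩ := hex
          simp at hp
          subst hp
          exact Relation.TransGen.single (step_of_red hpred)
    · have hmf : l.map Prod.fst ≠ [] := by simp [hl]
      have hms : l.map Prod.snd ≠ [] := by simp [hl]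
      obtain ⟨ihrtg, ihtg⟩ := ih hl (fun p hp => hcond p (List.mem_cons_of_mem q hp))
      rw [List.map_cons, List.map_cons, rb_cons hmf, rb_cons hms]
      have tailRtg : Relation.ReflTransGen Step
          (Tm.pair q.1 (rb (l.map Prod.fst))) (Tm.pair q.1 (rb (l.map Prod.snd))) :=
        Relation.ReflTransGen.lift (fun z => Tm.pair q.1 z) (fun _ _ h => step_pairR h) _ _ ihrtg
      rcases hcond q (List.mem_cons_self) with hred | heq
      · have headStep : Step (Tm.pair q.1 (rb (l.map Prod.snd)))
            (Tm.pair q.2 (rb (l.map Prod.snd))) := step_pairL (step_of_red hred)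
        exact ⟨tailRtg.tail headStep, fun _ => Relation.TransGen.tail' tailRtg headStep⟩
      · rw [← heq]
        refine ⟨tailRtg, ?_⟩
        intro hex
        obtain ⟨p, hp, hpred⟩ := hex
        rcases List.mem_cons.mp hp with rfl | hp
        · rw [← heq] at hpred
          exact Relation.TransGen.tail' tailRtg (step_pairL (step_of_red hpred))
        · exact Relation.TransGen.lift (fun z => Tm.pair q.1 z) (fun _ _ h => step_pairR h) _ _
            (ihtg ⟨p, hp, hpred⟩)

lemma map_eq_add_split {α β : Type*} (f : α → β) :
    ∀ {X : Multiset β} {C : Multiset α} {Y : Multiset β}, C.map f = X + Y →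
    ∃ C1 C2, C = C1 + C2 ∧ C1.map f = X ∧ C2.map f = Y := by
  intro X
  induction X using Multiset.induction with
  | empty =>
    intro C Y h
    exact ⟨0, C, by simp, by simp, by simpa using h⟩
  | @cons x X ih =>
    intro C Y h
    rw [Multiset.cons_add] at h
    have hx : x ∈ C.map f := by rw [h]; exact Multiset.mem_cons_self _ _
    obtain ⟨c, hc, hfc⟩ := Multiset.mem_map.mp hx
    obtain ⟨C', rfl⟩ := Multiset.exists_cons_of_mem hc
    rw [Multiset.map_cons, hfc] at h
    have h' : C'.map f = X + Y := (Multiset.cons_inj_right x).mp h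
    obtain ⟨C1, C2, rfl, h1, h2⟩ := ih h'
    exact ⟨c ::ₘ C1, C2, by rw [Multiset.cons_add], by rw [Multiset.map_cons, hfc, h1], h2⟩

/-- Main decomposition lemma: a step from a pair is, modulo structural equivalence,
a (nonempty) combination of steps of the two components. -/
lemma pair_step_split {a b t : Tm} (h : Step (.pair a b) t) :
    ∃ a' b', SeqStar (.pair a' b') t ∧
      ((Relation.TransGen Step a a' ∧ Reach b b') ∨
       (Reach a a' ∧ Relation.TransGen Step b b')) := by
  obtain ⟨u, v, h1, h2, h3⟩ := h
  have hrel : MRel (comps a + comps b) (comps u) := by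
    have := comps_seqstar h1
    rwa [show comps (Tm.pair a b) = comps a + comps b from rfl] at this
  obtain ⟨Ua, Ub, hUa, hUb, hUsum⟩ := Multiset.rel_add_left.mp hrel
  obtain ⟨C, hCfst, hCbind, hCcond, p0, hp0C, hp0red⟩ := comps_red h2
  have hsplit : C.map Prod.fst = Ua + Ub := by rw [hCfst, hUsum]
  obtain ⟨Ca, Cb, rfl, hfa, hfb⟩ := map_eq_add_split Prod.fst hsplit
  have hUa0 : Ua ≠ 0 := by
    intro hh
    apply comps_ne_zero a
    rw [← Multiset.card_eq_zero] at hh ⊢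
    rw [Multiset.card_eq_card_of_rel hUa, hh]
  have hUb0 : Ub ≠ 0 := by
    intro hh
    apply comps_ne_zero b
    rw [← Multiset.card_eq_zero] at hh ⊢
    rw [Multiset.card_eq_card_of_rel hUb, hh]
  have hCa0 : Ca ≠ 0 := by
    intro hh; apply hUa0; rw [← hfa, hh]; simp
  have hCb0 : Cb ≠ 0 := by
    intro hh; apply hUb0; rw [← hfb, hh]; simp
  -- the reduced components
  have hgA : ∀ p ∈ Ca, comps (Prod.snd p) ≠ 0 := fun p _ => comps_ne_zero p.2
  have hgB : ∀ p ∈ Cb, comps (Prod.snd p) ≠ 0 := fun p _ => comps_ne_zero p.2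
  have chainA : SeqStar (rbm (Ca.bind fun p => comps p.2)) (rbm (Ca.map Prod.snd)) := by
    refine ss_trans (rbm_bind Ca _ hCa0 hgA) ?_
    exact rel_rbm (mrel_map_map (fun p _ => ss_symm (ss_rbm_comps p.2)))
  have chainB : SeqStar (rbm (Cb.bind fun p => comps p.2)) (rbm (Cb.map Prod.snd)) := by
    refine ss_trans (rbm_bind Cb _ hCb0 hgB) ?_
    exact rel_rbm (mrel_map_map (fun p _ => ss_symm (ss_rbm_comps p.2)))
  have hvsplit : comps v = (Ca.bind fun p => comps p.2) + (Cb.bind fun p => comps p.2) := by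
    rw [← hCbind, Multiset.add_bind]
  have pairchain : SeqStar v (.pair (rbm (Ca.map Prod.snd)) (rbm (Cb.map Prod.snd))) := by
    refine ss_trans (ss_rbm_comps v) ?_
    rw [hvsplit]
    refine ss_trans (rbm_add (bind_ne_zero hCa0 hgA) (bind_ne_zero hCb0 hgB)) ?_
    exact ss_pair chainA chainB
  -- component chains
  have preA : SeqStar a (rb (Ca.toList.map Prod.fst)) := by
    refine ss_trans (ss_rbm_comps a) (ss_trans (rel_rbm hUa) ?_)
    rw [← hfa]
    exact ss_symm (ss_rb_of_coe (by rw [← Multiset.map_coe, Multiset.coe_toList]))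
  have postA : SeqStar (rb (Ca.toList.map Prod.snd)) (rbm (Ca.map Prod.snd)) :=
    ss_rb_of_coe (by rw [← Multiset.map_coe, Multiset.coe_toList])
  have preB : SeqStar b (rb (Cb.toList.map Prod.fst)) := by
    refine ss_trans (ss_rbm_comps b) (ss_trans (rel_rbm hUb) ?_)
    rw [← hfb]
    exact ss_symm (ss_rb_of_coe (by rw [← Multiset.map_coe, Multiset.coe_toList]))
  have postB : SeqStar (rb (Cb.toList.map Prod.snd)) (rbm (Cb.map Prod.snd)) :=
    ss_rb_of_coe (by rw [← Multiset.map_coe, Multiset.coe_toList])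
  have condA : ∀ p ∈ Ca.toList, Red p.1 p.2 ∨ p.1 = p.2 := fun p hp =>
    hCcond p (Multiset.mem_add.mpr (Or.inl (Multiset.mem_toList.mp hp)))
  have condB : ∀ p ∈ Cb.toList, Red p.1 p.2 ∨ p.1 = p.2 := fun p hp =>
    hCcond p (Multiset.mem_add.mpr (Or.inr (Multiset.mem_toList.mp hp)))
  have tlA : Ca.toList ≠ [] := by simpa [Multiset.toList_eq_nil] using hCa0
  have tlB : Cb.toList ≠ [] := by simpa [Multiset.toList_eq_nil] using hCb0
  obtain ⟨rtgA, tgA⟩ := rb_steps Ca.toList tlA condA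
  obtain ⟨rtgB, tgB⟩ := rb_steps Cb.toList tlB condB
  have reachA : Reach a (rbm (Ca.map Prod.snd)) :=
    reach_trans (reach_of_ss preA) (reach_trans (reach_of_steps rtgA) (reach_of_ss postA))
  have reachB : Reach b (rbm (Cb.map Prod.snd)) :=
    reach_trans (reach_of_ss preB) (reach_trans (reach_of_steps rtgB) (reach_of_ss postB))
  refine ⟨rbm (Ca.map Prod.snd), rbm (Cb.map Prod.snd),
    ss_trans (ss_symm pairchain) h3, ?_⟩
  rcases Multiset.mem_add.mp hp0C with hmem | hmem
  · refine Or.inl ⟨?_, reachB⟩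
    exact tg_post (tg_pre preA (tgA ⟨p0, Multiset.mem_toList.mpr hmem, hp0red⟩)) postA
  · refine Or.inr ⟨reachA, ?_⟩
    exact tg_post (tg_pre preB (tgB ⟨p0, Multiset.mem_toList.mpr hmem, hp0red⟩)) postB

end SNPairProof6
/-- A pair of strongly normalising terms is strongly normalising. -/
theorem sn_pair (r₁ r₂ : Tm) (h1 : SN r₁) (h2 : SN r₂) : SN (.pair r₁ r₂) := by
  suffices H : ∀ a, AccT a → ∀ b, AccT b → SN (Tm.pair a b) from
    H r₁ (accT_of_sn h1) r₂ (accT_of_sn h2)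
  intro a ha
  induction ha with
  | intro a haa iha =>
    intro b hb
    induction hb with
    | intro b hbb ihb =>
      constructor
      intro t ht
      obtain ⟨a', b', hpair, hcase⟩ := pair_step_split ht
      have hsn : SN (Tm.pair a' b') := by
        rcases hcase with ⟨htg, hreach⟩ | ⟨hreach, htg⟩
        · exact iha a' htg b' (accT_reach ⟨b, hbb⟩ hreach)
        · exact sn_reach (ihb b' htg) (reach_pairL hreach)
      exact sn_reach hsn (reach_of_ss hpair)
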